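/- Every constraint α·x ≥ 1 with α ∈ ℝ_{≥0}^n having at most k nonzero coefficients, each at most 1, is ℤ_+-equivalent to a k-roundable constraint: there exists α' ∈ ℝ_{≥0}^n such that (i) for all x ∈ ℤ_{≥0}^n, α·x ≥ 1 ⟺ α'·x ≥ 1, and (ii) for all x ∈ ℝ_{≥0}^n, α'·x ≥ 1 implies α'·⌊kx⌋ ≥ 1. -/
import Mathlib

open Finset in
open Classical in
/-- Main construction lemma: the nondegenerate case where `α` has a nonzero entry. -/
theorem sparse_key (n k : ℕ) (hk : 2 ≤ k) (α : Fin n → ℝ)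
    (hα0 : ∀ i, 0 ≤ α i) (hα1 : ∀ i, α i ≤ 1)
    (hsparse : (Finset.univ.filter (fun i => α i ≠ 0)).card ≤ k)
    (j0 : Fin n) (hj0 : α j0 ≠ 0) :
    ∃ α' : Fin n → ℝ, (∀ i, 0 ≤ α' i) ∧
      (∀ x : Fin n → ℕ, (1 ≤ ∑ i, α i * (x i : ℝ)) ↔ (1 ≤ ∑ i, α' i * (x i : ℝ))) ∧
      (∀ x : Fin n → ℝ, (∀ i, 0 ≤ x i) → 1 ≤ ∑ i, α' i * x i →
        1 ≤ ∑ i, α' i * (⌊(k : ℝ) * x i⌋ : ℝ)) := by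
  classical
  have hαpos : ∀ i, α i ≠ 0 → 0 < α i := fun i hi => lt_of_le_of_ne (hα0 i) (Ne.symm hi)
  -- single-coordinate thresholds
  set m : Fin n → ℕ := fun i => if α i = 0 then 0 else ⌈(α i)⁻¹⌉₊ with hm_def
  have hm_eq : ∀ i, α i ≠ 0 → m i = ⌈(α i)⁻¹⌉₊ := by intro i hi; simp [hm_def, hi]
  have hm1 : ∀ i, α i ≠ 0 → 1 ≤ m i := by
    intro i hi
    rw [hm_eq i hi]
    exact Nat.one_le_iff_ne_zero.mpr (Nat.pos_iff_ne_zero.mp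
      (Nat.ceil_pos.mpr (inv_pos.mpr (hαpos i hi))))
  have hmmul : ∀ i, α i ≠ 0 → 1 ≤ α i * (m i : ℝ) := by
    intro i hi
    have h1 : (α i)⁻¹ ≤ (m i : ℝ) := by rw [hm_eq i hi]; exact Nat.le_ceil _
    calc (1 : ℝ) = α i * (α i)⁻¹ := (mul_inv_cancel₀ hi).symm
      _ ≤ α i * (m i : ℝ) := by
          exact mul_le_mul_of_nonneg_left h1 (hα0 i)
  have hmzero : ∀ i, α i = 0 → m i = 0 := by intro i hi; simp [hm_def, hi]
  -- the box of bounded integer solutions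
  set B : Finset (Fin n → ℕ) :=
    (Fintype.piFinset fun i => Finset.range (m i + 1)).filter
      (fun z => 1 ≤ ∑ i, α i * (z i : ℝ)) with hB_def
  have hB_box : ∀ z ∈ B, ∀ i, z i ≤ m i := by
    intro z hz i
    have := (Finset.mem_filter.mp hz).1
    have := Fintype.mem_piFinset.mp this i
    exact Nat.lt_succ_iff.mp (Finset.mem_range.mp this)
  have hB_sol : ∀ z ∈ B, 1 ≤ ∑ i, α i * (z i : ℝ) := fun z hz => (Finset.mem_filter.mp hz).2
  have hB_mem : ∀ z : Fin n → ℕ, (∀ i, z i ≤ m i) → 1 ≤ ∑ i, α i * (z i : ℝ) → z ∈ B := by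
    intro z hbox hsol
    refine Finset.mem_filter.mpr ⟨Fintype.mem_piFinset.mpr fun i => ?_, hsol⟩
    exact Finset.mem_range.mpr (Nat.lt_succ_iff.mpr (hbox i))
  -- axis vectors
  have haxis : ∀ j, α j ≠ 0 → (fun i => if i = j then m j else 0) ∈ B := by
    intro j hj
    refine hB_mem _ (fun i => ?_) ?_
    · by_cases h : i = j <;> simp [h]
    · have : ∑ i, α i * ((if i = j then m j else 0 : ℕ) : ℝ) = α j * (m j : ℝ) := by
        rw [Finset.sum_eq_single_of_mem j (Finset.mem_univ j)]
        · simp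
        · intro i _ hij; simp [hij]
      rw [this]; exact hmmul j hj
  have haxis_sum : ∀ (γ : Fin n → ℝ) (j : Fin n),
      ∑ i, γ i * (((fun i => if i = j then m j else 0) : Fin n → ℕ) i : ℝ) = γ j * (m j : ℝ) := by
    intro γ j
    rw [Finset.sum_eq_single_of_mem j (Finset.mem_univ j)]
    · simp
    · intro i _ hij; simp [hij]
  have hBne : B.Nonempty := ⟨_, haxis j0 hj0⟩
  -- δ : the minimum value over B
  obtain ⟨z₀, hz₀B, hz₀min⟩ := B.exists_min_image (fun z => ∑ i, α i * (z i : ℝ)) hBne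
  set δ : ℝ := ∑ i, α i * (z₀ i : ℝ) with hδ_def
  have hδ1 : 1 ≤ δ := hB_sol z₀ hz₀B
  have hδpos : 0 < δ := lt_of_lt_of_le one_pos hδ1
  have hδle : ∀ z ∈ B, δ ≤ ∑ i, α i * (z i : ℝ) := hz₀min
  -- reduction of arbitrary integer solutions into the box
  have hred : ∀ x : Fin n → ℕ, 1 ≤ ∑ i, α i * (x i : ℝ) →
      ∃ z ∈ B, ∀ i, z i ≤ x i := by
    intro x hx
    refine ⟨fun i => min (x i) (m i), ?_, fun i => min_le_left _ _⟩
    refine hB_mem _ (fun i => min_le_right _ _) ?_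
    by_cases hc : ∃ i, α i ≠ 0 ∧ m i ≤ x i
    · obtain ⟨i, hi, hmi⟩ := hc
      have hterm : α i * ((min (x i) (m i) : ℕ) : ℝ) = α i * (m i : ℝ) := by
        rw [min_eq_right hmi]
      calc (1:ℝ) ≤ α i * (m i : ℝ) := hmmul i hi
        _ = α i * ((min (x i) (m i) : ℕ) : ℝ) := hterm.symm
        _ ≤ ∑ j, α j * ((min (x j) (m j) : ℕ) : ℝ) := by
            refine Finset.single_le_sum (f := fun j => α j * ((min (x j) (m j) : ℕ) : ℝ))
              (fun j _ => ?_) (Finset.mem_univ i)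
            exact mul_nonneg (hα0 j) (Nat.cast_nonneg _)
    · push_neg at hc
      have : ∀ i, α i * ((min (x i) (m i) : ℕ) : ℝ) = α i * (x i : ℝ) := by
        intro i
        by_cases hi : α i = 0
        · simp [hi]
        · rw [min_eq_left (le_of_lt (hc i hi))]
      rw [show ∑ i, α i * ((min (x i) (m i) : ℕ) : ℝ) = ∑ i, α i * (x i : ℝ) from
        Finset.sum_congr rfl fun i _ => this i]
      exact hx
  have hδle' : ∀ x : Fin n → ℕ, 1 ≤ ∑ i, α i * (x i : ℝ) → δ ≤ ∑ i, α i * (x i : ℝ) := by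
    intro x hx
    obtain ⟨z, hzB, hzle⟩ := hred x hx
    refine le_trans (hδle z hzB) (Finset.sum_le_sum fun i _ => ?_)
    exact mul_le_mul_of_nonneg_left (Nat.cast_le.mpr (hzle i)) (hα0 i)
  -- upper bounds
  set u : Fin n → ℝ := fun i => α i / δ with hu_def
  have hu0 : ∀ i, 0 ≤ u i := fun i => div_nonneg (hα0 i) (le_of_lt hδpos)
  have hu1 : ∀ i, u i ≤ 1 := by
    intro i
    rw [hu_def]
    exact (div_le_one hδpos).mpr (le_trans (hα1 i) hδ1)
  have huzero : ∀ i, α i = 0 → u i = 0 := by intro i hi; simp [hu_def, hi]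
  -- the feasible set K
  set K : Set (Fin n → ℝ) := {β | (∀ i, β i ∈ Set.Icc 0 (u i)) ∧
    ∀ z ∈ B, 1 ≤ ∑ i, β i * (z i : ℝ)} with hK_def
  have huK : u ∈ K := by
    constructor
    · intro i; exact ⟨hu0 i, le_refl _⟩
    · intro z hz
      have : ∑ i, u i * (z i : ℝ) = (∑ i, α i * (z i : ℝ)) / δ := by
        rw [Finset.sum_div]
        refine Finset.sum_congr rfl fun i _ => ?_
        rw [hu_def]; ring
      rw [this]
      rw [le_div_iff₀ hδpos, one_mul]
      exact hδle z hz
  have hKcl : IsClosed K := by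
    have h1 : IsClosed {β : Fin n → ℝ | ∀ i, β i ∈ Set.Icc 0 (u i)} := by
      have : {β : Fin n → ℝ | ∀ i, β i ∈ Set.Icc 0 (u i)} =
          ⋂ i, (fun β : Fin n → ℝ => β i) ⁻¹' (Set.Icc 0 (u i)) := by
        ext β; simp [Set.mem_iInter]
      rw [this]
      exact isClosed_iInter fun i => IsClosed.preimage (continuous_apply i) isClosed_Icc
    have h2 : IsClosed {β : Fin n → ℝ | ∀ z ∈ B, 1 ≤ ∑ i, β i * (z i : ℝ)} := by
      have : {β : Fin n → ℝ | ∀ z ∈ B, 1 ≤ ∑ i, β i * (z i : ℝ)} =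
          ⋂ z ∈ B, {β : Fin n → ℝ | 1 ≤ ∑ i, β i * (z i : ℝ)} := by
        ext β; simp
      rw [this]
      refine isClosed_biInter fun z _ => ?_
      exact isClosed_le continuous_const
        (continuous_finset_sum _ fun i _ => (continuous_apply i).mul continuous_const)
    have : K = {β : Fin n → ℝ | ∀ i, β i ∈ Set.Icc 0 (u i)} ∩
        {β : Fin n → ℝ | ∀ z ∈ B, 1 ≤ ∑ i, β i * (z i : ℝ)} := by
      ext β; simp [hK_def, Set.mem_setOf_eq, Set.mem_inter_iff]
    rw [this]; exact h1.inter h2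
  have hKcp : IsCompact K := by
    refine IsCompact.of_isClosed_subset (isCompact_univ_pi fun i => isCompact_Icc
      (a := (0:ℝ)) (b := u i)) hKcl ?_
    intro β hβ
    rw [Set.mem_univ_pi]
    exact fun i => hβ.1 i
  -- the minimizer β
  obtain ⟨β, hβK, hβmin⟩ := hKcp.exists_isMinOn ⟨u, huK⟩
    ((continuous_finset_sum Finset.univ fun i _ => continuous_apply i).continuousOn
      (f := fun β : Fin n → ℝ => ∑ i, β i))
  have hmin : ∀ γ ∈ K, ∑ i, β i ≤ ∑ i, γ i := fun γ hγ => hβmin hγ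
  have hβ0 : ∀ i, 0 ≤ β i := fun i => (hβK.1 i).1
  have hβu : ∀ i, β i ≤ u i := fun i => (hβK.1 i).2
  have hβ1 : ∀ i, β i ≤ 1 := fun i => le_trans (hβu i) (hu1 i)
  have hβB : ∀ z ∈ B, 1 ≤ ∑ i, β i * (z i : ℝ) := hβK.2
  have hβzero : ∀ i, α i = 0 → β i = 0 :=
    fun i hi => le_antisymm (le_of_le_of_eq (hβu i) (huzero i hi)) (hβ0 i)
  -- non-solutions stay non-solutions
  have husum : ∀ x : Fin n → ℕ, ∑ i, u i * (x i : ℝ) = (∑ i, α i * (x i : ℝ)) / δ := by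
    intro x
    rw [Finset.sum_div]
    exact Finset.sum_congr rfl fun i _ => by rw [hu_def]; ring
  have hnonsol : ∀ x : Fin n → ℕ, ∑ i, α i * (x i : ℝ) < 1 → ∑ i, β i * (x i : ℝ) < 1 := by
    intro x hx
    have h1 : ∑ i, β i * (x i : ℝ) ≤ ∑ i, u i * (x i : ℝ) :=
      Finset.sum_le_sum fun i _ => mul_le_mul_of_nonneg_right (hβu i) (Nat.cast_nonneg _)
    have h2 : (∑ i, α i * (x i : ℝ)) / δ ≤ ∑ i, α i * (x i : ℝ) :=
      div_le_self (Finset.sum_nonneg fun i _ => mul_nonneg (hα0 i) (Nat.cast_nonneg _)) hδ1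
    calc ∑ i, β i * (x i:ℝ) ≤ ∑ i, u i * (x i : ℝ) := h1
      _ = (∑ i, α i * (x i : ℝ)) / δ := husum x
      _ ≤ ∑ i, α i * (x i : ℝ) := h2
      _ < 1 := hx
  have hsolge : ∀ x : Fin n → ℕ, 1 ≤ ∑ i, α i * (x i : ℝ) → 1 ≤ ∑ i, β i * (x i : ℝ) := by
    intro x hx
    obtain ⟨z, hzB, hzle⟩ := hred x hx
    calc (1:ℝ) ≤ ∑ i, β i * (z i : ℝ) := hβB z hzB
      _ ≤ ∑ i, β i * (x i : ℝ) := Finset.sum_le_sum fun i _ =>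
          mul_le_mul_of_nonneg_left (Nat.cast_le.mpr (hzle i)) (hβ0 i)
  -- every positive coordinate of β carries a tight constraint
  have hβpos : ∀ j, α j ≠ 0 → 0 < β j := by
    intro j hj
    have h1 : (1:ℝ) ≤ β j * (m j : ℝ) := by
      have := hβB _ (haxis j hj)
      rwa [haxis_sum β j] at this
    by_contra hcon
    push_neg at hcon
    have h2 : β j * (m j : ℝ) ≤ 0 :=
      mul_nonpos_iff.mpr (Or.inr ⟨hcon, Nat.cast_nonneg _⟩)
    linarith
  have htight : ∀ j, α j ≠ 0 → ∃ z ∈ B, 1 ≤ z j ∧ ∑ i, β i * (z i : ℝ) = 1 := by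
    intro j hj
    by_contra hcon
    push_neg at hcon
    set T : Finset (Fin n → ℕ) := B.filter (fun z => 1 ≤ z j) with hT_def
    have hTne : T.Nonempty :=
      ⟨_, Finset.mem_filter.mpr ⟨haxis j hj, by simpa using hm1 j hj⟩⟩
    have hTmem : ∀ z ∈ T, z ∈ B ∧ 1 ≤ z j := fun z hz =>
      ⟨(Finset.mem_filter.mp hz).1, (Finset.mem_filter.mp hz).2⟩
    have hslack : ∀ z ∈ T, 0 < (∑ i, β i * (z i : ℝ)) - 1 := by
      intro z hz
      obtain ⟨hzB, hzj⟩ := hTmem z hz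
      exact sub_pos.mpr (lt_of_le_of_ne (hβB z hzB) (Ne.symm (hcon z hzB hzj)))
    obtain ⟨z₁, hz₁T, hz₁min⟩ :=
      T.exists_min_image (fun z => ((∑ i, β i * (z i:ℝ)) - 1) / (z j : ℝ)) hTne
    have hzjpos : ∀ z ∈ T, (0:ℝ) < (z j : ℝ) := by
      intro z hz
      exact_mod_cast Nat.lt_of_lt_of_le Nat.zero_lt_one (hTmem z hz).2
    set ε : ℝ := min (((∑ i, β i * (z₁ i:ℝ)) - 1) / (z₁ j : ℝ)) (β j) with hε_def
    have hεpos : 0 < ε :=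
      lt_min (div_pos (hslack z₁ hz₁T) (hzjpos z₁ hz₁T)) (hβpos j hj)
    have hεβ : ε ≤ β j := min_le_right _ _
    set β' : Fin n → ℝ := Function.update β j (β j - ε) with hβ'_def
    have hsum' : ∀ z : Fin n → ℕ,
        ∑ i, β' i * (z i : ℝ) = (∑ i, β i * (z i:ℝ)) - ε * (z j : ℝ) := by
      intro z
      have e1 : ∑ i, β' i * (z i : ℝ)
          = (∑ i ∈ Finset.univ.erase j, β' i * (z i:ℝ)) + β' j * (z j:ℝ) :=
        (Finset.sum_erase_add _ _ (Finset.mem_univ j)).symm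
      have e2 : ∑ i, β i * (z i : ℝ)
          = (∑ i ∈ Finset.univ.erase j, β i * (z i:ℝ)) + β j * (z j:ℝ) :=
        (Finset.sum_erase_add _ _ (Finset.mem_univ j)).symm
      have e3 : ∑ i ∈ Finset.univ.erase j, β' i * (z i:ℝ)
          = ∑ i ∈ Finset.univ.erase j, β i * (z i:ℝ) := by
        refine Finset.sum_congr rfl fun i hi => ?_
        rw [hβ'_def, Function.update_of_ne (Finset.ne_of_mem_erase hi)]
      have e4 : β' j = β j - ε := by rw [hβ'_def]; simp
      rw [e1, e2, e3, e4]; ring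
    have hsumtot : ∑ i, β' i = (∑ i, β i) - ε := by
      have e1 : ∑ i, β' i = (∑ i ∈ Finset.univ.erase j, β' i) + β' j :=
        (Finset.sum_erase_add _ _ (Finset.mem_univ j)).symm
      have e2 : ∑ i, β i = (∑ i ∈ Finset.univ.erase j, β i) + β j :=
        (Finset.sum_erase_add _ _ (Finset.mem_univ j)).symm
      have e3 : ∑ i ∈ Finset.univ.erase j, β' i = ∑ i ∈ Finset.univ.erase j, β i := by
        refine Finset.sum_congr rfl fun i hi => ?_
        rw [hβ'_def, Function.update_of_ne (Finset.ne_of_mem_erase hi)]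
      have e4 : β' j = β j - ε := by rw [hβ'_def]; simp
      rw [e1, e2, e3, e4]; ring
    have hβ'K : β' ∈ K := by
      constructor
      · intro i
        by_cases hij : i = j
        · subst hij
          have e4 : β' i = β i - ε := by rw [hβ'_def]; simp
          rw [e4]
          exact ⟨by linarith, le_trans (by linarith) (hβu i)⟩
        · rw [hβ'_def, Function.update_of_ne hij]
          exact ⟨hβ0 i, hβu i⟩
      · intro z hzB
        rw [hsum' z]
        by_cases hzj : z j = 0
        · rw [hzj]
          simpa using hβB z hzB
        · have hzT : z ∈ T :=
            Finset.mem_filter.mpr ⟨hzB, Nat.one_le_iff_ne_zero.mpr hzj⟩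
          have h1 : ε ≤ ((∑ i, β i * (z i:ℝ)) - 1) / (z j : ℝ) :=
            le_trans (min_le_left _ _) (hz₁min z hzT)
          have h2 : ε * (z j : ℝ) ≤ (∑ i, β i * (z i:ℝ)) - 1 := by
            rw [← le_div_iff₀ (hzjpos z hzT)]
            exact h1
          linarith
    have := hmin β' hβ'K
    rw [hsumtot] at this
    linarith
  -- the support of α
  set F : Finset (Fin n) := Finset.univ.filter (fun i => α i ≠ 0) with hF_def
  have hFk : (F.card : ℝ) ≤ (k : ℝ) := Nat.cast_le.mpr hsparse
  have hmemF : ∀ i, i ∈ F ↔ α i ≠ 0 := by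
    intro i; rw [hF_def]; simp
  -- MAIN CLAIM
  have hclaim : ∀ w : Fin n → ℕ, ∑ i, α i * (w i : ℝ) < 1 →
      ∑ i, β i * ((w i : ℝ) + 1) ≤ (k : ℝ) := by
    intro w hw
    have hFsum : ∑ i ∈ F, β i * ((w i:ℝ)+1) = ∑ i, β i * ((w i:ℝ)+1) := by
      refine Finset.sum_subset (Finset.subset_univ F) ?_
      intro i _ hi
      have hαi : α i = 0 := by
        by_contra hne; exact hi ((hmemF i).mpr hne)
      rw [hβzero i hαi, zero_mul]
    by_cases hY : ∃ z ∈ B, (∑ i, β i * (z i : ℝ) = 1 ∧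
        2 ≤ (Finset.univ.filter fun i => z i ≠ 0).card)
    · -- there is a tight constraint of support at least two
      obtain ⟨z, hzB, hz1, hzcard⟩ := hY
      set sup : Finset (Fin n) := Finset.univ.filter (fun i => z i ≠ 0) with hsup_def
      have hsupF : sup ⊆ F := by
        intro i hi
        have hzi : z i ≠ 0 := (Finset.mem_filter.mp hi).2
        refine (hmemF i).mpr ?_
        intro hαi
        exact hzi (Nat.le_zero.mp (le_of_le_of_eq (hB_box z hzB i) (hmzero i hαi)))
      have h1 : ∑ i, β i * (w i : ℝ) < 1 := hnonsol w hw
      have h2 : ∑ i ∈ sup, β i ≤ 1 := by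
        have e1 : ∑ i ∈ sup, β i ≤ ∑ i ∈ sup, β i * (z i : ℝ) := by
          refine Finset.sum_le_sum fun i hi => ?_
          have hzi : 1 ≤ z i := Nat.one_le_iff_ne_zero.mpr (Finset.mem_filter.mp hi).2
          calc β i = β i * 1 := (mul_one _).symm
            _ ≤ β i * (z i : ℝ) := by
                refine mul_le_mul_of_nonneg_left ?_ (hβ0 i)
                exact_mod_cast hzi
        have e2 : ∑ i ∈ sup, β i * (z i:ℝ) = ∑ i, β i * (z i:ℝ) := by
          refine Finset.sum_subset (Finset.subset_univ _) ?_
          intro i _ hi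
          have : z i = 0 := by
            by_contra hne
            exact hi (Finset.mem_filter.mpr ⟨Finset.mem_univ i, hne⟩)
          rw [this]; simp
        calc ∑ i ∈ sup, β i ≤ ∑ i ∈ sup, β i * (z i : ℝ) := e1
          _ = ∑ i, β i * (z i:ℝ) := e2
          _ = 1 := hz1
      have h3 : ∑ i ∈ F \ sup, β i ≤ (F.card : ℝ) - (sup.card : ℝ) := by
        calc ∑ i ∈ F \ sup, β i ≤ (F \ sup).card • (1:ℝ) :=
              Finset.sum_le_card_nsmul _ _ _ (fun i _ => hβ1 i)
          _ = ((F \ sup).card : ℝ) := by simp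
          _ = ((F.card - sup.card : ℕ) : ℝ) := by rw [Finset.card_sdiff_of_subset hsupF]
          _ = (F.card : ℝ) - (sup.card : ℝ) := by
              rw [Nat.cast_sub (Finset.card_le_card hsupF)]
      have h4 : ∑ i ∈ F, β i = ∑ i ∈ F \ sup, β i + ∑ i ∈ sup, β i :=
        (Finset.sum_sdiff hsupF).symm
      have h5 : (2:ℝ) ≤ (sup.card : ℝ) := by exact_mod_cast hzcard
      have hFw : ∑ i ∈ F, β i * (w i:ℝ) = ∑ i, β i * (w i:ℝ) := by
        refine Finset.sum_subset (Finset.subset_univ F) ?_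
        intro i _ hi
        have hαi : α i = 0 := by
          by_contra hne; exact hi ((hmemF i).mpr hne)
        rw [hβzero i hαi, zero_mul]
      have hsplit : ∑ i ∈ F, β i * ((w i:ℝ)+1)
          = ∑ i ∈ F, β i * (w i:ℝ) + ∑ i ∈ F, β i := by
        rw [← Finset.sum_add_distrib]
        exact Finset.sum_congr rfl fun i _ => by ring
      rw [← hFsum, hsplit, hFw]
      linarith
    · -- all tight constraints have singleton support
      push_neg at hY
      rw [← hFsum]
      have hterm : ∀ i ∈ F, β i * ((w i:ℝ)+1) ≤ 1 := by
        intro i hiF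
        have hαi : α i ≠ 0 := (hmemF i).mp hiF
        obtain ⟨z, hzB, hzi, hzt⟩ := htight i hαi
        have hcard : (Finset.univ.filter fun l => z l ≠ 0).card ≤ 1 :=
          Nat.lt_succ_iff.mp (hY z hzB hzt)
        have hzl : ∀ l, l ≠ i → z l = 0 := by
          intro l hl
          by_contra hzl0
          have hli : l ∈ Finset.univ.filter (fun l => z l ≠ 0) :=
            Finset.mem_filter.mpr ⟨Finset.mem_univ _, hzl0⟩
          have hii : i ∈ Finset.univ.filter (fun l => z l ≠ 0) :=
            Finset.mem_filter.mpr ⟨Finset.mem_univ _,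
              Nat.one_le_iff_ne_zero.mp hzi⟩
          exact hl (Finset.card_le_one.mp hcard l hli i hii)
        have hzsum : ∑ l, β l * (z l : ℝ) = β i * (z i : ℝ) := by
          rw [Finset.sum_eq_single_of_mem i (Finset.mem_univ i)]
          intro l _ hli; rw [hzl l hli]; simp
        have hβz : β i * (z i : ℝ) = 1 := by rw [← hzsum]; exact hzt
        have hzαsum : ∑ l, α l * (z l : ℝ) = α i * (z i : ℝ) := by
          rw [Finset.sum_eq_single_of_mem i (Finset.mem_univ i)]
          intro l _ hli; rw [hzl l hli]; simp
        have hz1 : 1 ≤ α i * (z i : ℝ) := by rw [← hzαsum]; exact hB_sol z hzB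
        have hwi : α i * (w i : ℝ) < 1 := by
          refine lt_of_le_of_lt ?_ hw
          exact Finset.single_le_sum (f := fun l => α l * (w l:ℝ))
            (fun l _ => mul_nonneg (hα0 l) (Nat.cast_nonneg _)) (Finset.mem_univ i)
        have hwim : w i < m i := by
          rw [hm_eq i hαi]
          refine Nat.lt_ceil.mpr ?_
          rw [inv_eq_one_div, lt_div_iff₀ (hαpos i hαi)]
          linarith [hwi]
        have hmz : m i ≤ z i := by
          rw [hm_eq i hαi]
          refine Nat.ceil_le.mpr ?_
          rw [inv_eq_one_div, div_le_iff₀ (hαpos i hαi)]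
          linarith [hz1]
        have hcast : (w i : ℝ) + 1 ≤ (z i : ℝ) := by
          exact_mod_cast Nat.succ_le_of_lt (lt_of_lt_of_le hwim hmz)
        calc β i * ((w i:ℝ)+1) ≤ β i * (z i:ℝ) :=
              mul_le_mul_of_nonneg_left hcast (hβ0 i)
          _ = 1 := hβz
      calc ∑ i ∈ F, β i * ((w i:ℝ)+1) ≤ ∑ _i ∈ F, (1:ℝ) := Finset.sum_le_sum hterm
        _ = (F.card : ℝ) := by simp
        _ ≤ (k:ℝ) := hFk
  -- CONCLUSION
  refine ⟨β, hβ0, fun x => ⟨hsolge x, fun hb => ?_⟩, fun x hx0 hx1 => ?_⟩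
  · by_contra hcon
    push_neg at hcon
    exact absurd hb (not_le.mpr (hnonsol x hcon))
  · set w : Fin n → ℕ := fun i => (⌊(k:ℝ) * x i⌋).toNat with hw_def
    have hkpos : (0:ℝ) < (k:ℝ) := by
      have : 0 < k := lt_of_lt_of_le two_pos hk
      exact_mod_cast this
    have hwcast : ∀ i, ((w i : ℕ) : ℝ) = ((⌊(k:ℝ) * x i⌋ : ℤ) : ℝ) := by
      intro i
      have hnn : (0:ℤ) ≤ ⌊(k:ℝ) * x i⌋ :=
        Int.floor_nonneg.mpr (mul_nonneg (le_of_lt hkpos) (hx0 i))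
      rw [hw_def]
      exact_mod_cast Int.toNat_of_nonneg hnn
    have hgoal : ∑ i, β i * ((⌊(k:ℝ) * x i⌋ : ℤ):ℝ) = ∑ i, β i * (w i : ℝ) :=
      Finset.sum_congr rfl fun i _ => by rw [hwcast i]
    rw [hgoal]
    by_cases hsol : 1 ≤ ∑ i, α i * (w i : ℝ)
    · exact hsolge w hsol
    · exfalso
      push_neg at hsol
      have hcl := hclaim w hsol
      by_cases hz : ∀ i, β i = 0
      · have hzz : ∑ i, β i * x i = 0 := by
          refine Finset.sum_eq_zero fun i _ => ?_
          rw [hz i, zero_mul]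
        rw [hzz] at hx1; linarith
      · push_neg at hz
        obtain ⟨i₀, hi₀⟩ := hz
        have hi₀pos : 0 < β i₀ := lt_of_le_of_ne (hβ0 i₀) (Ne.symm hi₀)
        have hflt : ∀ i, (k:ℝ) * x i < (w i : ℝ) + 1 := by
          intro i
          rw [hwcast i]
          exact Int.lt_floor_add_one _
        have hstrict : ∑ i, β i * ((k:ℝ) * x i) < ∑ i, β i * ((w i:ℝ)+1) := by
          refine Finset.sum_lt_sum
            (fun i _ => mul_le_mul_of_nonneg_left (le_of_lt (hflt i)) (hβ0 i))
            ⟨i₀, Finset.mem_univ _, ?_⟩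
          exact mul_lt_mul_of_pos_left (hflt i₀) hi₀pos
        have hL : (k:ℝ) * (∑ i, β i * x i) = ∑ i, β i * ((k:ℝ) * x i) := by
          rw [Finset.mul_sum]
          exact Finset.sum_congr rfl fun i _ => by ring
        have hK : (k:ℝ) ≤ (k:ℝ) * (∑ i, β i * x i) :=
          le_mul_of_one_le_right (le_of_lt hkpos) hx1
        linarith

open Classical in
theorem stmt_6 (n k : ℕ) (hk : 2 ≤ k) (α : Fin n → ℝ)
    (hα0 : ∀ i, 0 ≤ α i) (hα1 : ∀ i, α i ≤ 1)
    (hsparse : (Finset.univ.filter (fun i => α i ≠ 0)).card ≤ k) :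
    ∃ α' : Fin n → ℝ, (∀ i, 0 ≤ α' i) ∧
      (∀ x : Fin n → ℕ, (1 ≤ ∑ i, α i * (x i : ℝ)) ↔ (1 ≤ ∑ i, α' i * (x i : ℝ))) ∧
      (∀ x : Fin n → ℝ, (∀ i, 0 ≤ x i) → 1 ≤ ∑ i, α' i * x i →
        1 ≤ ∑ i, α' i * (⌊(k : ℝ) * x i⌋ : ℝ)) := by
  classical
  by_cases h : ∃ j, α j ≠ 0
  · obtain ⟨j, hj⟩ := h
    exact sparse_key n k hk α hα0 hα1 hsparse j hj
  · push_neg at h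
    refine ⟨fun _ => 0, fun i => le_refl 0, fun x => ?_, fun x _ hx1 => ?_⟩
    · have h1 : ∑ i, α i * (x i : ℝ) = 0 :=
        Finset.sum_eq_zero fun i _ => by rw [h i, zero_mul]
      have h2 : ∑ i, (0:ℝ) * (x i : ℝ) = 0 :=
        Finset.sum_eq_zero fun i _ => by rw [zero_mul]
      rw [h1, h2]
    · exfalso
      have h2 : ∑ i, (0:ℝ) * x i = 0 :=
        Finset.sum_eq_zero fun i _ => by rw [zero_mul]
      rw [h2] at hx1
      linarith
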